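/- For the sigmoid activation σ(x) = ∫_0^x e^{−t²/2} dt, the Hermite tail satisfies ε_σ(n) ≤ 2^{−n} for all n ≥ 0. -/

import Mathlib

open MeasureTheory ProbabilityTheory

/-- The normalized (probabilists') Hermite polynomials, orthonormal w.r.t. N(0,1). -/
noncomputable def hermiteN : ℕ → ℝ → ℝ
  | 0 => fun _ => 1
  | 1 => fun x => x
  | n + 2 => fun x => x / Real.sqrt (n + 2) * hermiteN (n + 1) x
      - Real.sqrt ((n + 1) / (n + 2)) * hermiteN n x

/-- The standard Gaussian measure on ℝ. -/
noncomputable def gaussMeasure : Measure ℝ := gaussianReal 0 1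

open Polynomial Real Filter
open scoped ENNReal NNReal

lemma derivative_hermite (n : ℕ) :
    derivative (hermite (n + 1)) = (n + 1 : ℕ) • hermite n := by
  induction n with
  | zero => simp [hermite_one]
  | succ n ih =>
    rw [hermite_succ (n+1), derivative_sub, derivative_mul, derivative_X, one_mul, ih,
      derivative_smul]
    simp only [nsmul_eq_mul, hermite_succ]
    push_cast
    ring

lemma aeval_hermite_succ_succ (n : ℕ) (x : ℝ) :
    (Polynomial.aeval x (hermite (n+2)) : ℝ)
      = x * Polynomial.aeval x (hermite (n+1)) - ((n:ℝ)+1) * Polynomial.aeval x (hermite n) := by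
  rw [hermite_succ (n+1), derivative_hermite]
  simp only [map_sub, map_mul, aeval_X, map_nsmul, nsmul_eq_mul, map_natCast]
  push_cast
  ring

lemma hermiteN_eq : ∀ (n : ℕ) (x : ℝ),
    hermiteN n x = (Polynomial.aeval x (hermite n)) / Real.sqrt (n.factorial)
  | 0, x => by simp [hermiteN]
  | 1, x => by simp [hermiteN, hermite_one]
  | (n+2), x => by
    simp only [hermiteN]
    rw [hermiteN_eq (n+1), hermiteN_eq n, aeval_hermite_succ_succ]
    have e1 : Real.sqrt ((n+1).factorial) = Real.sqrt ((n:ℝ)+1) * Real.sqrt (n.factorial) := by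
      rw [Nat.factorial_succ]; push_cast; rw [Real.sqrt_mul (by positivity)]
    have e2 : Real.sqrt ((n+2).factorial) = Real.sqrt ((n:ℝ)+2) * Real.sqrt ((n+1).factorial) := by
      rw [Nat.factorial_succ (n+1)]; push_cast; rw [Real.sqrt_mul (by positivity)]; ring_nf
    have e3 : Real.sqrt (((n:ℝ)+1)/((n:ℝ)+2)) = Real.sqrt ((n:ℝ)+1) / Real.sqrt ((n:ℝ)+2) :=
      Real.sqrt_div (by positivity) _
    have h2 : (0:ℝ) < Real.sqrt ((n:ℝ)+2) := Real.sqrt_pos.2 (by positivity)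
    have hf : (0:ℝ) < Real.sqrt (n.factorial) := Real.sqrt_pos.2 (by positivity)
    rw [e2, e1]
    push_cast [e3]
    set s := Real.sqrt ((n:ℝ)+1) with hs
    have hs1 : s * s = (n:ℝ)+1 := Real.mul_self_sqrt (by positivity)
    have h1 : (0:ℝ) < s := Real.sqrt_pos.2 (by positivity)
    rw [← hs1]
    field_simp


lemma integrable_poly_gauss (p : ℝ[X]) {b : ℝ} (hb : 0 < b) :
    Integrable (fun x : ℝ => p.eval x * Real.exp (-b * x^2)) := by
  have : (fun x : ℝ => p.eval x * Real.exp (-b * x^2))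
      = fun x => ∑ i ∈ Finset.range (p.natDegree + 1),
          p.coeff i * (x ^ i * Real.exp (-b * x^2)) := by
    funext x
    rw [Polynomial.eval_eq_sum_range, Finset.sum_mul]
    simp [mul_assoc]
  rw [this]
  apply integrable_finset_sum
  intro i _
  apply Integrable.const_mul
  have := integrable_rpow_mul_exp_neg_mul_sq hb
    (s := (i:ℝ)) (neg_one_lt_zero.trans_le (Nat.cast_nonneg i))
  simpa [Real.rpow_natCast] using this

lemma integrable_aeval_gauss_half (q : Polynomial ℤ) :
    Integrable (fun x : ℝ => (Polynomial.aeval x q : ℝ) * Real.exp (-x^2/2)) := by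
  have h := integrable_poly_gauss (q.map (algebraMap ℤ ℝ)) (b := 1/2) (by norm_num)
  apply h.congr
  filter_upwards with x
  rw [Polynomial.eval_map, ← Polynomial.aeval_def]
  ring_nf

lemma integrable_aeval_gauss_one (q : Polynomial ℤ) :
    Integrable (fun x : ℝ => (Polynomial.aeval x q : ℝ) * Real.exp (-x^2)) := by
  have h := integrable_poly_gauss (q.map (algebraMap ℤ ℝ)) (b := 1) (by norm_num)
  apply h.congr
  filter_upwards with x
  rw [Polynomial.eval_map, ← Polynomial.aeval_def]
  ring_nf

lemma gauss_sq (x : ℝ) : Real.exp (-x^2/2) * Real.exp (-x^2/2) = Real.exp (-x^2) := by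
  rw [← Real.exp_add]; ring_nf

lemma hasDerivAt_hermite_gauss (k : ℕ) (x : ℝ) :
    HasDerivAt (fun y : ℝ => (Polynomial.aeval y (hermite k) : ℝ) * Real.exp (-y^2/2))
      (-((Polynomial.aeval x (hermite (k+1)) : ℝ) * Real.exp (-x^2/2))) x := by
  have h1 : HasDerivAt (fun y : ℝ => (Polynomial.aeval y (hermite k) : ℝ))
      (Polynomial.aeval x (derivative (hermite k)) : ℝ) x :=
    (hermite k).hasDerivAt_aeval x
  have h2 : HasDerivAt (fun y : ℝ => Real.exp (-y^2/2)) (-x * Real.exp (-x^2/2)) x := by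
    have hx : HasDerivAt (fun y : ℝ => -y^2/2) (-x) x := by
      have := (hasDerivAt_pow 2 x).neg.div_const 2
      simpa using this.congr_deriv (by ring)
    simpa [mul_comm] using hx.exp
  have := h1.mul h2
  refine this.congr_deriv ?_
  have : (Polynomial.aeval x (hermite (k+1)) : ℝ)
      = x * Polynomial.aeval x (hermite k) - Polynomial.aeval x (derivative (hermite k)) := by
    rw [hermite_succ]; simp
  rw [this]; ring



lemma cont_gauss_half : Continuous fun t : ℝ => Real.exp (-t^2/2) := by fun_prop

lemma integrable_gauss_half : Integrable (fun t : ℝ => Real.exp (-t^2/2)) := by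
  have := integrable_exp_neg_mul_sq (b := 1/2) (by norm_num)
  apply this.congr
  filter_upwards with x
  ring_nf

noncomputable def sigma' (x : ℝ) : ℝ := ∫ t in (0:ℝ)..x, Real.exp (-t^2/2)

lemma sigma'_hasDerivAt (x : ℝ) : HasDerivAt sigma' (Real.exp (-x^2/2)) x :=
  intervalIntegral.integral_hasDerivAt_right
    integrable_gauss_half.intervalIntegrable
    (cont_gauss_half.aestronglyMeasurable.stronglyMeasurableAtFilter)
    cont_gauss_half.continuousAt

lemma sigma'_bound (x : ℝ) : ‖sigma' x‖ ≤ ∫ t : ℝ, Real.exp (-t^2/2) := by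
  have hnn : ∀ t : ℝ, 0 ≤ Real.exp (-t^2/2) := fun t => (Real.exp_pos _).le
  rcases le_total 0 x with hx | hx
  · rw [sigma', intervalIntegral.integral_of_le hx, Real.norm_eq_abs, abs_of_nonneg
      (setIntegral_nonneg measurableSet_Ioc fun t _ => hnn t)]
    exact setIntegral_le_integral integrable_gauss_half (ae_of_all _ hnn)
  · rw [sigma', intervalIntegral.integral_symm, intervalIntegral.integral_of_le hx,
      norm_neg, Real.norm_eq_abs, abs_of_nonneg
      (setIntegral_nonneg measurableSet_Ioc fun t _ => hnn t)]
    exact setIntegral_le_integral integrable_gauss_half (ae_of_all _ hnn)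

lemma sigma'_continuous : Continuous sigma' :=
  continuous_iff_continuousAt.2 fun x => (sigma'_hasDerivAt x).differentiableAt.continuousAt

lemma integral_gaussMeasure (f : ℝ → ℝ) :
    ∫ x, f x ∂gaussMeasure = ∫ x, gaussianPDFReal 0 1 x * f x := by
  rw [gaussMeasure, gaussianReal_of_var_ne_zero _ one_ne_zero, gaussianPDF_def]
  have h : (fun x => ENNReal.ofReal (gaussianPDFReal 0 1 x))
      = fun x => ((gaussianPDFReal 0 1 x).toNNReal : ℝ≥0∞) := rfl
  rw [h, integral_withDensity_eq_integral_smul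
    (measurable_gaussianPDFReal 0 1).real_toNNReal f]
  congr 1
  funext x
  rw [NNReal.smul_def, smul_eq_mul, Real.coe_toNNReal _ (gaussianPDFReal_nonneg 0 1 x)]

lemma gaussianPDFReal_zero_one (x : ℝ) :
    gaussianPDFReal 0 1 x = (Real.sqrt (2 * Real.pi))⁻¹ * Real.exp (-x^2/2) := by
  simp only [gaussianPDFReal, NNReal.coe_one, mul_one, sub_zero]


noncomputable def J (k : ℕ) : ℝ := ∫ x : ℝ, (Polynomial.aeval x (hermite k) : ℝ) * Real.exp (-x^2)

lemma cont_aeval_gauss_half (q : Polynomial ℤ) :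
    Continuous fun x : ℝ => (Polynomial.aeval x q : ℝ) * Real.exp (-x^2/2) :=
  (q.continuous_aeval).mul (by fun_prop)

lemma ibp_sigma (k : ℕ) :
    ∫ x : ℝ, sigma' x * ((Polynomial.aeval x (hermite (k+1)) : ℝ) * Real.exp (-x^2/2)) = J k := by
  have hu : ∀ x : ℝ, HasDerivAt sigma' (Real.exp (-x^2/2)) x := sigma'_hasDerivAt
  have hv : ∀ x : ℝ, HasDerivAt
      (fun y : ℝ => -((Polynomial.aeval y (hermite k) : ℝ) * Real.exp (-y^2/2)))
      ((Polynomial.aeval x (hermite (k+1)) : ℝ) * Real.exp (-x^2/2)) x := by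
    intro x
    have := (hasDerivAt_hermite_gauss k x).neg; rw [neg_neg] at this; exact this
  have hbdd : ∃ C, ∀ x : ℝ, ‖sigma' x‖ ≤ C := ⟨_, sigma'_bound⟩
  have huv' : Integrable (sigma' * fun x : ℝ =>
      (Polynomial.aeval x (hermite (k+1)) : ℝ) * Real.exp (-x^2/2)) :=
    (integrable_aeval_gauss_half (hermite (k+1))).bdd_mul
      sigma'_continuous.aestronglyMeasurable (ae_of_all _ sigma'_bound)
  have hu'v : Integrable ((fun x : ℝ => Real.exp (-x^2/2)) * fun y : ℝ =>
      -((Polynomial.aeval y (hermite k) : ℝ) * Real.exp (-y^2/2))) := by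
    have := (integrable_aeval_gauss_one (-(hermite k)))
    apply this.congr
    filter_upwards with x
    simp only [Pi.mul_apply, map_neg]
    rw [← gauss_sq x]
    ring
  have huv : Integrable (sigma' * fun y : ℝ =>
      -((Polynomial.aeval y (hermite k) : ℝ) * Real.exp (-y^2/2))) :=
    ((integrable_aeval_gauss_half (hermite k)).neg.congr (by
      filter_upwards with x; simp)).bdd_mul sigma'_continuous.aestronglyMeasurable (ae_of_all _ sigma'_bound)
  have h := integral_mul_deriv_eq_deriv_mul_of_integrable (fun x _ => hu x) (fun x _ => hv x) huv' hu'v huv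
  rw [h, J, ← integral_neg]
  apply integral_congr_ae
  filter_upwards with x
  rw [← gauss_sq x]
  ring


lemma gauss_tendsto_zero_top : Tendsto (fun x : ℝ => Real.exp (-x^2)) atTop (nhds 0) := by
  apply Real.tendsto_exp_atBot.comp
  exact tendsto_neg_atBot_iff.2 (tendsto_pow_atTop (by norm_num))

lemma gauss_tendsto_zero_bot : Tendsto (fun x : ℝ => Real.exp (-x^2)) atBot (nhds 0) := by
  apply Real.tendsto_exp_atBot.comp
  have h : Tendsto (fun x : ℝ => x^2) atBot atTop := by
    have := (tendsto_pow_atTop (n := 2) (by norm_num : 2 ≠ 0)).comp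
      (Filter.tendsto_neg_atBot_atTop : Tendsto (fun x : ℝ => -x) atBot atTop)
    apply this.congr
    intro x
    simp [Function.comp, neg_pow]
  exact tendsto_neg_atBot_iff.2 h

lemma J_zero : J 0 = Real.sqrt Real.pi := by
  rw [J]
  have : ∀ x : ℝ, (Polynomial.aeval x (hermite 0) : ℝ) * Real.exp (-x^2)
      = Real.exp (-1 * x^2) := by
    intro x; simp [hermite_zero]
  rw [integral_congr_ae (ae_of_all _ this), integral_gaussian]
  norm_num

lemma J_one : J 1 = 0 := by
  have hderiv : ∀ x : ℝ, HasDerivAt (fun y : ℝ => -(1/2) * Real.exp (-y^2))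
      (x * Real.exp (-x^2)) x := by
    intro x
    have hx : HasDerivAt (fun y : ℝ => -y^2) (-(2*x)) x := by
      exact (hasDerivAt_pow 2 x).neg.congr_deriv (by norm_num)
    have := (hx.exp.const_mul (-(1/2) : ℝ))
    apply this.congr_deriv
    ring
  have hint : Integrable (fun x : ℝ => x * Real.exp (-x^2)) :=
    integrable_mul_exp_neg_mul_sq one_pos |>.congr (by filter_upwards with x; ring_nf)
  have h := integral_of_hasDerivAt_of_tendsto hderiv hint
    ((gauss_tendsto_zero_bot.const_mul (-(1/2):ℝ)).congr (fun x => rfl) |>.mono_right le_rfl)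
    ((gauss_tendsto_zero_top.const_mul (-(1/2):ℝ)).congr (fun x => rfl))
  rw [J]
  have e : ∀ x : ℝ, (Polynomial.aeval x (hermite 1) : ℝ) * Real.exp (-x^2)
      = x * Real.exp (-x^2) := by intro x; simp [hermite_one]
  rw [integral_congr_ae (ae_of_all _ e), h]
  simp

lemma J_rec (k : ℕ) : J (k+2) = -(((k:ℝ)+1)/2) * J k := by
  have hu : ∀ x : ℝ, HasDerivAt (fun y : ℝ => Real.exp (-y^2/2))
      (-x * Real.exp (-x^2/2)) x := by
    intro x
    have hx : HasDerivAt (fun y : ℝ => -y^2/2) (-x) x := by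
      have := (hasDerivAt_pow 2 x).neg.div_const 2
      simpa using this.congr_deriv (by ring)
    simpa [mul_comm] using hx.exp
  have hv : ∀ x : ℝ, HasDerivAt
      (fun y : ℝ => -((Polynomial.aeval y (hermite (k+1)) : ℝ) * Real.exp (-y^2/2)))
      ((Polynomial.aeval x (hermite (k+2)) : ℝ) * Real.exp (-x^2/2)) x := by
    intro x
    have := (hasDerivAt_hermite_gauss (k+1) x).neg; rw [neg_neg] at this; exact this
  have huv' : Integrable ((fun y : ℝ => Real.exp (-y^2/2)) * fun x : ℝ =>
      (Polynomial.aeval x (hermite (k+2)) : ℝ) * Real.exp (-x^2/2)) := by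
    apply (integrable_aeval_gauss_one (hermite (k+2))).congr
    filter_upwards with x
    simp only [Pi.mul_apply]
    rw [← gauss_sq x]; ring
  have hu'v : Integrable ((fun x : ℝ => -x * Real.exp (-x^2/2)) * fun y : ℝ =>
      -((Polynomial.aeval y (hermite (k+1)) : ℝ) * Real.exp (-y^2/2))) := by
    apply (integrable_aeval_gauss_one (Polynomial.X * hermite (k+1))).congr
    filter_upwards with x
    simp only [Pi.mul_apply, map_mul, Polynomial.aeval_X]
    rw [← gauss_sq x]; ring
  have huv : Integrable ((fun y : ℝ => Real.exp (-y^2/2)) * fun y : ℝ =>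
      -((Polynomial.aeval y (hermite (k+1)) : ℝ) * Real.exp (-y^2/2))) := by
    apply (integrable_aeval_gauss_one (-hermite (k+1))).congr
    filter_upwards with x
    simp only [Pi.mul_apply, map_neg]
    rw [← gauss_sq x]; ring
  have h := integral_mul_deriv_eq_deriv_mul_of_integrable (fun x _ => hu x) (fun x _ => hv x) huv' hu'v huv
  have lhs_eq : ∫ x : ℝ, Real.exp (-x^2/2) *
      ((Polynomial.aeval x (hermite (k+2)) : ℝ) * Real.exp (-x^2/2)) = J (k+2) := by
    rw [J]
    apply integral_congr_ae
    filter_upwards with x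
    rw [← gauss_sq x]; ring
  have rhs_eq : (∫ x : ℝ, (-x * Real.exp (-x^2/2)) *
      (-((Polynomial.aeval x (hermite (k+1)) : ℝ) * Real.exp (-x^2/2))))
      = J (k+2) + ((k:ℝ)+1) * J k := by
    have e : ∀ x : ℝ, (-x * Real.exp (-x^2/2)) *
        (-((Polynomial.aeval x (hermite (k+1)) : ℝ) * Real.exp (-x^2/2)))
        = (Polynomial.aeval x (hermite (k+2)) : ℝ) * Real.exp (-x^2)
          + ((k:ℝ)+1) * ((Polynomial.aeval x (hermite k) : ℝ) * Real.exp (-x^2)) := by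
      intro x
      rw [← gauss_sq x, aeval_hermite_succ_succ]
      ring
    rw [integral_congr_ae (ae_of_all _ e), integral_add
      (integrable_aeval_gauss_one (hermite (k+2)))
      ((integrable_aeval_gauss_one (hermite k)).const_mul _), MeasureTheory.integral_const_mul]
    rfl
  rw [lhs_eq] at h
  rw [show (∫ x : ℝ, (-x * Real.exp (-x^2/2)) *
      (-((Polynomial.aeval x (hermite (k+1)) : ℝ) * Real.exp (-x^2/2)))) =
      J (k+2) + ((k:ℝ)+1) * J k from rhs_eq] at h
  linarith

lemma J_sq_le : ∀ k : ℕ, (J k)^2 ≤ Real.pi * k.factorial / 2^k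
  | 0 => by
    rw [J_zero, Real.sq_sqrt Real.pi_pos.le]
    simp
  | 1 => by
    rw [J_one]
    have : (0:ℝ) ≤ Real.pi * (1:ℕ).factorial / 2^1 := by positivity
    simpa using this
  | (k+2) => by
    have ih := J_sq_le k
    have hfk : (0:ℝ) < k.factorial := by exact_mod_cast k.factorial_pos
    have h2k : (0:ℝ) < 2^k := by positivity
    rw [J_rec]
    have e2 : ((k+2).factorial : ℝ) = ((k:ℝ)+2) * (((k:ℝ)+1) * k.factorial) := by
      rw [Nat.factorial_succ, Nat.factorial_succ]; push_cast; ring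
    rw [e2]
    have hk1 : (0:ℝ) ≤ ((k:ℝ)+1)^2 / 4 := by positivity
    calc (-(((k:ℝ)+1)/2) * J k)^2 = ((k:ℝ)+1)^2/4 * (J k)^2 := by ring
    _ ≤ ((k:ℝ)+1)^2/4 * (Real.pi * k.factorial / 2^k) := by
        exact mul_le_mul_of_nonneg_left ih hk1
    _ ≤ Real.pi * (((k:ℝ)+2) * (((k:ℝ)+1) * k.factorial)) / 2^(k+2) := by
        rw [pow_add]
        have key : ((k:ℝ)+1)^2/4 * (Real.pi * k.factorial / 2^k)
            = Real.pi * (((k:ℝ)+1)^2 * k.factorial) / (2^k * 2^2) := by ring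
        rw [key]
        gcongr Real.pi * ?_ / (2^k * 2^2)
        nlinarith [hfk, Nat.cast_nonneg (α := ℝ) k]

lemma a_formula (k : ℕ) :
    (∫ x, sigma' x * hermiteN (k+1) x ∂gaussMeasure)
      = (Real.sqrt (2 * Real.pi))⁻¹ * (Real.sqrt ((k+1).factorial))⁻¹ * J k := by
  rw [integral_gaussMeasure]
  have e : ∀ x : ℝ, gaussianPDFReal 0 1 x * (sigma' x * hermiteN (k+1) x)
      = (Real.sqrt (2 * Real.pi))⁻¹ * ((Real.sqrt ((k+1).factorial))⁻¹ *
        (sigma' x * ((Polynomial.aeval x (hermite (k+1)) : ℝ) * Real.exp (-x^2/2)))) := by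
    intro x
    rw [gaussianPDFReal_zero_one, hermiteN_eq]
    field_simp
  rw [integral_congr_ae (ae_of_all _ e), MeasureTheory.integral_const_mul,
    MeasureTheory.integral_const_mul, ibp_sigma, mul_assoc]

lemma key_bound (k : ℕ) :
    (∫ x, sigma' x * hermiteN (k+1) x ∂gaussMeasure)^2 ≤ (1/2:ℝ)^(k+1) := by
  rw [a_formula, mul_pow, mul_pow]
  have h1 : ((Real.sqrt (2*Real.pi))⁻¹)^2 = (2*Real.pi)⁻¹ := by
    rw [← Real.sqrt_inv, Real.sq_sqrt (by positivity)]
  have h2 : ((Real.sqrt (((k+1).factorial : ℝ)))⁻¹)^2 = (((k+1).factorial : ℝ))⁻¹ := by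
    rw [← Real.sqrt_inv, Real.sq_sqrt (by positivity)]
  rw [h1, h2]
  have hJ := J_sq_le k
  have hpos : (0:ℝ) ≤ (2*Real.pi)⁻¹ * (((k+1).factorial : ℝ))⁻¹ := by positivity
  calc (2*Real.pi)⁻¹ * (((k+1).factorial : ℝ))⁻¹ * (J k)^2
      ≤ (2*Real.pi)⁻¹ * (((k+1).factorial : ℝ))⁻¹ * (Real.pi * k.factorial / 2^k) := by
        rw [mul_assoc, mul_assoc]
        exact mul_le_mul_of_nonneg_left (mul_le_mul_of_nonneg_left hJ (by positivity))
          (by positivity)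
    _ = ((k.factorial : ℝ) / ((k+1).factorial : ℝ)) * (1/2)^(k+1) := by
        have hf1 : (0:ℝ) < ((k+1).factorial : ℝ) := by exact_mod_cast (k+1).factorial_pos
        field_simp
        rw [← pow_succ', ← mul_pow]; norm_num
    _ ≤ 1 * (1/2:ℝ)^(k+1) := by
        apply mul_le_mul_of_nonneg_right _ (by positivity)
        rw [div_le_one (by exact_mod_cast (k+1).factorial_pos)]
        exact_mod_cast Nat.factorial_le (Nat.le_succ k)
    _ = (1/2:ℝ)^(k+1) := one_mul _

/-- For the sigmoid activation σ(x) = ∫₀ˣ e^{-t²/2} dt, the Hermite tail satisfies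
ε_σ(n) ≤ 2^{-n}. -/
theorem sigmoid_tail_bound (a : ℕ → ℝ)
    (ha : ∀ i, a i = ∫ x, (∫ t in (0 : ℝ)..x, Real.exp (-t ^ 2 / 2)) * hermiteN i x
        ∂gaussMeasure)
    (n : ℕ) :
    ∑' i, a (n + 1 + i) ^ 2 ≤ (2 : ℝ) ^ (-(n : ℤ)) := by
  have key' : ∀ m : ℕ, a (m+1)^2 ≤ (1/2:ℝ)^(m+1) := by
    intro m
    rw [ha]
    exact key_bound m
  have hle : ∀ i : ℕ, a (n+1+i)^2 ≤ (1/2:ℝ)^(n+1+i) := by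
    intro i
    have e : n+1+i = (n+i)+1 := by omega
    rw [e]
    exact key' (n+i)
  have hs : Summable (fun i : ℕ => (1/2:ℝ)^(n+1+i)) := by
    simpa [pow_add] using
      (summable_geometric_of_lt_one (by norm_num : (0:ℝ) ≤ 1/2) (by norm_num)).mul_left
        ((1/2:ℝ)^(n+1))
  have hsum : Summable (fun i : ℕ => a (n+1+i)^2) :=
    Summable.of_nonneg_of_le (fun i => sq_nonneg _) hle hs
  calc ∑' i, a (n+1+i)^2 ≤ ∑' i, (1/2:ℝ)^(n+1+i) := Summable.tsum_le_tsum hle hsum hs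
    _ = (1/2:ℝ)^(n+1) * (1 - 1/2)⁻¹ := by
        simp_rw [pow_add]
        rw [tsum_mul_left, tsum_geometric_of_lt_one (by norm_num) (by norm_num)]
    _ = (2:ℝ)^(-(n:ℤ)) := by
        rw [zpow_neg, zpow_natCast]
        rw [div_pow, one_pow]
        norm_num
        rw [pow_succ]
        field_simp
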